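/- Let K ≥ 1, d ≥ 1, 0 ≤ r ≤ d, and u, v ∈ {0,…,d} with u ≤ v. Let x_C = 0 ∈ {0,…,K}^d and x̄_C be the vector with first r coordinates equal to 1 and rest 0. Then the number of z ∈ {0,…,K}^d with ‖z − x_C‖₀ = u and ‖z − x̄_C‖₀ = v equals ∑_{i = max(0, v−r)}^{min(u, d−r, ⌊(u+v−r)/2⌋)} [ (K−1)^{j*} · r! / ((u−i−j*)! (v−i−j*)! j*!) ] · [ K^i (d−r)! / ((d−r−i)! i!) ], where j* = u + v − 2i − r. Moreover this count is symmetric in u and v. -/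

import Mathlib

open Finset

lemma fact_div_eq (a b j r : ℕ) (h : a + b + j = r) :
    r.factorial / (a.factorial * b.factorial * j.factorial) = r.choose b * (a + j).choose a := by
  have h1 : r.choose b * b.factorial * (r - b).factorial = r.factorial :=
    Nat.choose_mul_factorial_mul_factorial (by omega)
  have h2 : (a + j).choose a * a.factorial * (a + j - a).factorial = (a + j).factorial :=
    Nat.choose_mul_factorial_mul_factorial (by omega)
  have hrb : r - b = a + j := by omega
  have haj : a + j - a = j := by omega
  rw [hrb] at h1
  rw [haj] at h2
  apply Nat.div_eq_of_eq_mul_left (by positivity)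
  rw [← h1, ← h2]; ring

lemma cardA (K m i : ℕ) :
    (univ.filter fun w : Fin m → Fin (K + 1) =>
        (univ.filter fun j => w j ≠ 0).card = i).card = m.choose i * K ^ i := by
  by_cases him : i ≤ m
  · rw [Finset.card_eq_sum_card_fiberwise
      (f := fun w : Fin m → Fin (K + 1) => univ.filter fun j => w j ≠ 0)
      (t := Finset.powersetCard i univ)
      (fun w hw => by simp only [Finset.mem_coe, mem_filter] at hw
                      exact Finset.mem_powersetCard_univ.2 hw.2)]
    have key : ∀ s ∈ Finset.powersetCard i (univ : Finset (Fin m)),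
        ((univ.filter fun w : Fin m → Fin (K + 1) =>
            (univ.filter fun j => w j ≠ 0).card = i).filter
          fun w => (univ.filter fun j => w j ≠ 0) = s).card = K ^ i := by
      intro s hs
      have hsc : s.card = i := Finset.mem_powersetCard_univ.1 hs
      have hset : ((univ.filter fun w : Fin m → Fin (K + 1) =>
            (univ.filter fun j => w j ≠ 0).card = i).filter
          fun w => (univ.filter fun j => w j ≠ 0) = s)
          = Fintype.piFinset (fun j => if j ∈ s then univ.filter (· ≠ 0) else {0}) := by
        ext w
        simp only [mem_filter, mem_univ, true_and, Fintype.mem_piFinset]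
        constructor
        · rintro ⟨-, h2⟩ j
          by_cases hj : j ∈ s
          · simp only [hj, if_pos]
            have : j ∈ univ.filter fun j => w j ≠ 0 := h2 ▸ hj
            simpa using (mem_filter.1 this).2
          · simp only [hj, if_neg, not_false_iff, Finset.mem_singleton]
            by_contra hne
            exact hj (h2 ▸ (mem_filter.2 ⟨mem_univ _, hne⟩))
        · intro h
          have heq : (univ.filter fun j => w j ≠ 0) = s := by
            ext j
            simp only [mem_filter, mem_univ, true_and]
            constructor
            · intro hne
              by_contra hj
              have := h j
              simp only [hj, if_neg, not_false_iff, Finset.mem_singleton] at this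
              exact hne this
            · intro hj
              have := h j
              simp only [hj, if_pos, mem_filter, mem_univ, true_and] at this
              exact this
          exact ⟨heq ▸ hsc, heq⟩
      rw [hset, Fintype.card_piFinset]
      have : ∀ j : Fin m, (if j ∈ s then univ.filter (· ≠ (0 : Fin (K+1))) else {0}).card
          = if j ∈ s then K else 1 := by
        intro j
        by_cases hj : j ∈ s <;> simp [hj, Finset.filter_ne', Finset.card_erase_of_mem]
      rw [Finset.prod_congr rfl (fun j _ => this j)]
      rw [Finset.prod_ite_mem, Finset.univ_inter, Finset.prod_const, hsc]
    rw [Finset.sum_congr rfl key, Finset.sum_const, Finset.card_powersetCard,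
      Finset.card_univ, Fintype.card_fin, smul_eq_mul]
  · rw [Nat.choose_eq_zero_of_lt (by omega), zero_mul, Finset.card_eq_zero]
    rw [Finset.filter_eq_empty_iff]
    intro w _
    have : (univ.filter fun j => w j ≠ 0).card ≤ m := le_trans (Finset.card_filter_le _ _) (by simp)
    omega

lemma zero_ne_one_fin (K : ℕ) (hK : 1 ≤ K) : (0 : Fin (K + 1)) ≠ 1 := by
  intro h
  have h0 : ((0 : Fin (K + 1)) : ℕ) = 0 := rfl
  have h1 : ((1 : Fin (K + 1)) : ℕ) = 1 := by
    rw [Fin.val_one']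
    exact Nat.mod_eq_of_lt (by omega)
  rw [h] at h0
  omega

lemma card_other (K : ℕ) (hK : 1 ≤ K) :
    ((univ : Finset (Fin (K + 1))).filter fun x => x ≠ 0 ∧ x ≠ 1).card = K - 1 := by
  have : ((univ : Finset (Fin (K + 1))).filter fun x => x ≠ 0 ∧ x ≠ 1)
      = univ \ {0, 1} := by
    ext x; simp [and_comm]
  rw [this, Finset.card_sdiff_of_subset (by simp)]
  rw [Finset.card_insert_of_notMem (by simp [zero_ne_one_fin K hK]), Finset.card_singleton]
  simp

lemma cardB (K r p q : ℕ) (hK : 1 ≤ K) (hp : p ≤ r) (hq : q ≤ r) (hpq : r ≤ p + q) :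
    (univ.filter fun w : Fin r → Fin (K + 1) =>
        (univ.filter fun j => w j ≠ 0).card = p
          ∧ (univ.filter fun j => w j ≠ 1).card = q).card
      = r.choose (r - p) * p.choose (r - q) * (K - 1) ^ (p + q - r) := by
  classical
  have hcompl : ∀ (w : Fin r → Fin (K + 1)) (x : Fin (K + 1)),
      (univ.filter fun j => w j = x).card + (univ.filter fun j => w j ≠ x).card = r := by
    intro w x
    rw [Finset.card_filter_add_card_filter_not]
    simp
  set T : Finset ((_ : Finset (Fin r)) × Finset (Fin r)) :=
    (Finset.powersetCard (r - p) univ).sigma (fun s => Finset.powersetCard (r - q) sᶜ) with hT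
  rw [Finset.card_eq_sum_card_fiberwise
    (f := fun w : Fin r → Fin (K + 1) =>
      (⟨univ.filter fun j => w j = 0, univ.filter fun j => w j = 1⟩ :
        (_ : Finset (Fin r)) × Finset (Fin r)))
    (t := T) ?_]
  · have key : ∀ st ∈ T,
        ((univ.filter fun w : Fin r → Fin (K + 1) =>
            (univ.filter fun j => w j ≠ 0).card = p
              ∧ (univ.filter fun j => w j ≠ 1).card = q).filter
          fun w => (⟨univ.filter fun j => w j = 0, univ.filter fun j => w j = 1⟩ :
            (_ : Finset (Fin r)) × Finset (Fin r)) = st).card = (K - 1) ^ (p + q - r) := by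
      rintro ⟨s, t⟩ hst
      rw [hT, Finset.mem_sigma, Finset.mem_powersetCard, Finset.mem_powersetCard] at hst
      obtain ⟨⟨-, hs⟩, hts, ht⟩ := hst
      have hdisj : Disjoint s t :=
        Finset.disjoint_left.2 fun a has hat => (Finset.mem_compl.1 (hts hat)) has
      have hset : ((univ.filter fun w : Fin r → Fin (K + 1) =>
            (univ.filter fun j => w j ≠ 0).card = p
              ∧ (univ.filter fun j => w j ≠ 1).card = q).filter
          fun w => (⟨univ.filter fun j => w j = 0, univ.filter fun j => w j = 1⟩ :
            (_ : Finset (Fin r)) × Finset (Fin r)) = Sigma.mk s t)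
          = Fintype.piFinset (fun j => if j ∈ s then {0} else if j ∈ t then {1}
              else univ.filter fun x => x ≠ 0 ∧ x ≠ 1) := by
        ext w
        simp only [mem_filter, mem_univ, true_and, Fintype.mem_piFinset, Sigma.mk.inj_iff,
          heq_eq_eq]
        constructor
        · rintro ⟨-, h0, h1⟩ j
          by_cases hjs : j ∈ s
          · have hw0 : w j = 0 := by
              rw [← h0] at hjs
              exact (mem_filter.1 hjs).2
            simp [hjs, hw0]
          · by_cases hjt : j ∈ t
            · have hw1 : w j = 1 := by
                rw [← h1] at hjt
                exact (mem_filter.1 hjt).2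
              simp [hjs, hjt, hw1]
            · have hw0 : w j ≠ 0 := by
                intro hw
                exact hjs (h0 ▸ mem_filter.2 ⟨mem_univ _, hw⟩)
              have hw1 : w j ≠ 1 := by
                intro hw
                exact hjt (h1 ▸ mem_filter.2 ⟨mem_univ _, hw⟩)
              simp [hjs, hjt, hw0, hw1]
        · intro h
          have h0 : (univ.filter fun j => w j = 0) = s := by
            ext j
            simp only [mem_filter, mem_univ, true_and]
            have hj := h j
            by_cases hjs : j ∈ s
            · simp only [hjs, if_pos, Finset.mem_singleton] at hj
              exact ⟨fun _ => hjs, fun _ => hj⟩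
            · constructor
              · intro hw
                by_cases hjt : j ∈ t
                · simp only [hjs, if_neg, hjt, if_pos, not_false_iff,
                    Finset.mem_singleton] at hj
                  exact absurd (hw ▸ hj) (zero_ne_one_fin K hK)
                · simp only [hjs, hjt, if_neg, not_false_iff, mem_filter] at hj
                  exact absurd hw hj.2.1
              · intro hjs'; exact absurd hjs' hjs
          have h1 : (univ.filter fun j => w j = 1) = t := by
            ext j
            simp only [mem_filter, mem_univ, true_and]
            have hj := h j
            by_cases hjt : j ∈ t
            · have hjs : j ∉ s := Finset.disjoint_right.1 hdisj hjt
              simp only [hjs, hjt, if_neg, if_pos, not_false_iff, Finset.mem_singleton] at hj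
              exact ⟨fun _ => hjt, fun _ => hj⟩
            · constructor
              · intro hw
                by_cases hjs : j ∈ s
                · simp only [hjs, if_pos, Finset.mem_singleton] at hj
                  exact absurd (hw ▸ hj).symm (zero_ne_one_fin K hK)
                · simp only [hjs, hjt, if_neg, not_false_iff, mem_filter] at hj
                  exact absurd hw hj.2.2
              · intro hjt'; exact absurd hjt' hjt
          have hc0 : (univ.filter fun j => w j ≠ 0).card = p := by
            have := hcompl w 0
            rw [h0, hs] at this
            omega
          have hc1 : (univ.filter fun j => w j ≠ 1).card = q := by
            have := hcompl w 1
            rw [h1, ht] at this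
            omega
          exact ⟨⟨hc0, hc1⟩, h0, h1⟩
      rw [hset, Fintype.card_piFinset]
      have hcards : ∀ j : Fin r, (if j ∈ s then ({0} : Finset (Fin (K+1)))
          else if j ∈ t then {1} else univ.filter fun x => x ≠ 0 ∧ x ≠ 1).card
          = if j ∈ s ∪ t then 1 else K - 1 := by
        intro j
        by_cases hjs : j ∈ s
        · simp [hjs]
        · by_cases hjt : j ∈ t <;> simp [hjs, hjt, card_other K hK]
      rw [Finset.prod_congr rfl (fun j _ => hcards j)]
      rw [← Finset.prod_mul_prod_compl (s ∪ t)]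
      rw [Finset.prod_congr rfl (fun j hj => if_pos hj), Finset.prod_const_one, one_mul]
      have hcc : ∀ j ∈ (s ∪ t)ᶜ, (if j ∈ s ∪ t then 1 else K - 1) = K - 1 := by
        intro j hj
        rw [if_neg (Finset.mem_compl.1 hj)]
      rw [Finset.prod_congr rfl hcc, Finset.prod_const]
      congr 1
      rw [Finset.card_compl, Finset.card_union_of_disjoint hdisj, hs, ht]
      simp only [Fintype.card_fin]
      omega
    rw [Finset.sum_congr rfl key, Finset.sum_const, smul_eq_mul]
    congr 1
    rw [hT, Finset.card_sigma]
    have : ∀ s ∈ Finset.powersetCard (r - p) (univ : Finset (Fin r)),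
        (Finset.powersetCard (r - q) sᶜ).card = p.choose (r - q) := by
      intro s hs
      rw [Finset.card_powersetCard, Finset.card_compl,
        (Finset.mem_powersetCard_univ.1 hs)]
      congr 1
      simp only [Fintype.card_fin]
      omega
    rw [Finset.sum_congr rfl this, Finset.sum_const, smul_eq_mul,
      Finset.card_powersetCard, Finset.card_univ, Fintype.card_fin]
  · intro w hw
    simp only [Finset.mem_coe, mem_filter, mem_univ, true_and] at hw
    obtain ⟨hwp, hwq⟩ := hw
    have e0 := hcompl w 0
    have e1 := hcompl w 1
    rw [Finset.mem_coe, hT, Finset.mem_sigma]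
    constructor
    · show (univ.filter fun j => w j = 0) ∈ Finset.powersetCard (r - p) univ
      rw [Finset.mem_powersetCard]
      exact ⟨Finset.subset_univ _, by omega⟩
    · show (univ.filter fun j => w j = 1) ∈
        Finset.powersetCard (r - q) (univ.filter fun j => w j = 0)ᶜ
      rw [Finset.mem_powersetCard]
      refine ⟨?_, by omega⟩
      intro j hj
      simp only [mem_filter, mem_univ, true_and] at hj
      rw [Finset.mem_compl]
      simp only [mem_filter, mem_univ, true_and]
      rw [hj]
      exact (zero_ne_one_fin K hK).symm



/-- Hamming distance on `{0,…,K}^d`. -/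
def ham {d K : ℕ} (x z : Fin d → Fin (K + 1)) : ℕ :=
  (Finset.univ.filter fun i => z i ≠ x i).card

/-- Lemma 3: the cardinality of the constant likelihood-ratio region
`L(u, v; r)` for the canonical pair `x_C = 0` and `x̄_C` (first `r`
coordinates `1`, rest `0`), together with its symmetry in `u, v`.
The guard on `i` encodes the summation range
`max(0, v−r) ≤ i ≤ min(u, d−r, ⌊(u+v−r)/2⌋)`; within it, all natural
subtractions are exact and `j* = u + v − 2i − r`. -/
theorem stmt_10 (K d r : ℕ) (hK : 1 ≤ K) (hd : 1 ≤ d) (hr : r ≤ d)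
    (u v : ℕ) (hu : u ≤ d) (hv : v ≤ d) (huv : u ≤ v) :
    (Finset.univ.filter fun z : Fin d → Fin (K + 1) =>
        ham (fun _ => 0) z = u
          ∧ ham (fun i => if (i : ℕ) < r then 1 else 0) z = v).card
      = (∑ i ∈ Finset.range (d + 1),
          if v ≤ i + r ∧ i ≤ u ∧ i + r ≤ d ∧ 2 * i + r ≤ u + v then
            ((K - 1) ^ (u + v - 2 * i - r) * r.factorial
                / ((u - i - (u + v - 2 * i - r)).factorial
                    * (v - i - (u + v - 2 * i - r)).factorial
                    * (u + v - 2 * i - r).factorial))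
              * (K ^ i * (d - r).factorial
                  / ((d - r - i).factorial * i.factorial))
          else 0)
    ∧ (Finset.univ.filter fun z : Fin d → Fin (K + 1) =>
        ham (fun _ => 0) z = u
          ∧ ham (fun i => if (i : ℕ) < r then 1 else 0) z = v).card
      = (Finset.univ.filter fun z : Fin d → Fin (K + 1) =>
          ham (fun _ => 0) z = v
            ∧ ham (fun i => if (i : ℕ) < r then 1 else 0) z = u).card := by
  classical
  set xb : Fin d → Fin (K + 1) := fun i => if (i : ℕ) < r then 1 else 0 with hxb
  constructor
  · -- the counting formula
    set m := d - r with hm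
    have hrm : r + m = d := by rw [hm]; omega
    clear_value m
    set σ : Fin r ⊕ Fin m ≃ Fin d := finSumFinEquiv.trans (finCongr hrm) with hσ
    have hσl : ∀ a : Fin r, ((σ (Sum.inl a)) : ℕ) = (a : ℕ) := by
      intro a; simp [hσ]
    have hσr : ∀ b : Fin m, ((σ (Sum.inr b)) : ℕ) = r + (b : ℕ) := by
      intro b; simp [hσ]
    have hamsplit : ∀ (z x : Fin d → Fin (K + 1)), ham x z
        = (univ.filter fun a : Fin r => z (σ (Sum.inl a)) ≠ x (σ (Sum.inl a))).card
          + (univ.filter fun b : Fin m => z (σ (Sum.inr b)) ≠ x (σ (Sum.inr b))).card := by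
      intro z x
      rw [ham, Finset.card_filter, Finset.card_filter, Finset.card_filter,
        ← Equiv.sum_comp σ (fun i => if z i ≠ x i then 1 else 0), Fintype.sum_sum_type]
    set e : (Fin d → Fin (K + 1)) ≃ (Fin r → Fin (K + 1)) × (Fin m → Fin (K + 1)) :=
      ((Equiv.arrowCongr σ (Equiv.refl _)).symm).trans
        (Equiv.sumArrowEquivProdArrow _ _ _) with he
    have hevl : ∀ (p : (Fin r → Fin (K + 1)) × (Fin m → Fin (K + 1))) (a : Fin r),
        e.symm p (σ (Sum.inl a)) = p.1 a := by
      intro p a; simp [he]; rfl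
    have hevr : ∀ (p : (Fin r → Fin (K + 1)) × (Fin m → Fin (K + 1))) (b : Fin m),
        e.symm p (σ (Sum.inr b)) = p.2 b := by
      intro p b; simp [he]; rfl
    rw [← Finset.card_map e.toEmbedding]
    have hSmap : ((univ.filter fun z : Fin d → Fin (K + 1) =>
          ham (fun _ => 0) z = u ∧ ham xb z = v).map e.toEmbedding)
        = univ.filter fun p : (Fin r → Fin (K + 1)) × (Fin m → Fin (K + 1)) =>
            ((univ.filter fun a => p.1 a ≠ 0).card + (univ.filter fun b => p.2 b ≠ 0).card = u
              ∧ (univ.filter fun a => p.1 a ≠ 1).card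
                  + (univ.filter fun b => p.2 b ≠ 0).card = v) := by
      ext p
      rw [Finset.mem_map_equiv]
      simp only [mem_filter, mem_univ, true_and]
      have h0 : ham (fun _ => 0) (e.symm p)
          = (univ.filter fun a => p.1 a ≠ 0).card
            + (univ.filter fun b => p.2 b ≠ 0).card := by
        rw [hamsplit]
        congr 1
        · congr 1
          ext a
          simp [hevl p a]
        · congr 1
          ext b
          simp [hevr p b]
      have h1 : ham xb (e.symm p)
          = (univ.filter fun a => p.1 a ≠ 1).card
            + (univ.filter fun b => p.2 b ≠ 0).card := by
        rw [hamsplit]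
        congr 1
        · congr 1
          ext a
          simp [hevl p a, hxb, hσl a, a.isLt]
        · congr 1
          ext b
          simp [hevr p b, hxb, hσr b]
      rw [h0, h1]
    rw [hSmap]
    rw [Finset.card_eq_sum_card_fiberwise
      (f := fun p : (Fin r → Fin (K + 1)) × (Fin m → Fin (K + 1)) =>
        (univ.filter fun b => p.2 b ≠ 0).card)
      (t := Finset.range (d + 1)) ?_]
    · apply Finset.sum_congr rfl
      intro i _
      have hfib : (((univ.filter fun p : (Fin r → Fin (K + 1)) × (Fin m → Fin (K + 1)) =>
            ((univ.filter fun a => p.1 a ≠ 0).card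
                + (univ.filter fun b => p.2 b ≠ 0).card = u
              ∧ (univ.filter fun a => p.1 a ≠ 1).card
                  + (univ.filter fun b => p.2 b ≠ 0).card = v))).filter
          fun p => (univ.filter fun b => p.2 b ≠ 0).card = i)
          = (univ.filter fun w : Fin r → Fin (K + 1) =>
              (univ.filter fun a => w a ≠ 0).card + i = u
                ∧ (univ.filter fun a => w a ≠ 1).card + i = v)
            ×ˢ (univ.filter fun w : Fin m → Fin (K + 1) =>
              (univ.filter fun b => w b ≠ 0).card = i) := by
        ext p
        simp only [mem_filter, mem_univ, true_and, Finset.mem_product]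
        constructor
        · rintro ⟨⟨h1, h2⟩, h3⟩
          exact ⟨⟨by omega, by omega⟩, h3⟩
        · rintro ⟨⟨h1, h2⟩, h3⟩
          exact ⟨⟨by omega, by omega⟩, h3⟩
      rw [hfib, Finset.card_product]
      by_cases hg : v ≤ i + r ∧ i ≤ u ∧ i + r ≤ d ∧ 2 * i + r ≤ u + v
      · rw [if_pos hg]
        obtain ⟨hg1, hg2, hg3, hg4⟩ := hg
        have hBeq : (univ.filter fun w : Fin r → Fin (K + 1) =>
              (univ.filter fun a => w a ≠ 0).card + i = u
                ∧ (univ.filter fun a => w a ≠ 1).card + i = v)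
            = (univ.filter fun w : Fin r → Fin (K + 1) =>
              (univ.filter fun a => w a ≠ 0).card = u - i
                ∧ (univ.filter fun a => w a ≠ 1).card = v - i) := by
          apply Finset.filter_congr
          intro w _
          constructor
          · rintro ⟨h1, h2⟩; exact ⟨by omega, by omega⟩
          · rintro ⟨h1, h2⟩; exact ⟨by omega, by omega⟩
        rw [hBeq, cardB K r (u - i) (v - i) hK (by omega) (by omega) (by omega),
          cardA K m i]
        set j := u + v - 2 * i - r with hj
        have ha : u - i - j = r - (v - i) := by omega
        have hb : v - i - j = r - (u - i) := by omega
        have habj : (r - (v - i)) + (r - (u - i)) + j = r := by omega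
        have haj : (r - (v - i)) + j = u - i := by omega
        have hexp : (u - i) + (v - i) - r = j := by omega
        rw [ha, hb, hexp]
        have hdvd1 : (r - (v - i)).factorial * (r - (u - i)).factorial * j.factorial
            ∣ r.factorial := by
          have h1 : (r - (v - i)).factorial * (r - (u - i)).factorial
              ∣ ((r - (v - i)) + (r - (u - i))).factorial :=
            Nat.factorial_mul_factorial_dvd_factorial_add _ _
          have h2 : ((r - (v - i)) + (r - (u - i))).factorial * j.factorial
              ∣ (((r - (v - i)) + (r - (u - i))) + j).factorial :=
            Nat.factorial_mul_factorial_dvd_factorial_add _ _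
          rw [habj] at h2
          exact dvd_trans (mul_dvd_mul_right h1 _) h2
        rw [Nat.mul_div_assoc ((K - 1) ^ j) hdvd1]
        rw [fact_div_eq _ _ _ _ habj, haj]
        have hdvd2 : (m - i).factorial * i.factorial ∣ m.factorial := by
          have := Nat.factorial_mul_factorial_dvd_factorial (show i ≤ m by omega)
          rwa [mul_comm] at this
        rw [Nat.mul_div_assoc (K ^ i) hdvd2]
        have hch : m.factorial / ((m - i).factorial * i.factorial) = m.choose i := by
          rw [Nat.choose_eq_factorial_div_factorial (show i ≤ m by omega), mul_comm]
        rw [hch]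
        ring
      · rw [if_neg hg]
        by_cases hc3 : i + r ≤ d
        · have hB0 : (univ.filter fun w : Fin r → Fin (K + 1) =>
              (univ.filter fun a => w a ≠ 0).card + i = u
                ∧ (univ.filter fun a => w a ≠ 1).card + i = v).card = 0 := by
            rw [Finset.card_eq_zero, Finset.filter_eq_empty_iff]
            intro w _
            rintro ⟨h1, h2⟩
            have hle0 : (univ.filter fun a => w a ≠ 0).card ≤ r :=
              le_trans (Finset.card_filter_le _ _) (by simp)
            have hle1 : (univ.filter fun a => w a ≠ 1).card ≤ r :=
              le_trans (Finset.card_filter_le _ _) (by simp)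
            have hge : r ≤ (univ.filter fun a => w a ≠ 0).card
                + (univ.filter fun a => w a ≠ 1).card := by
              have hcover : (univ : Finset (Fin r))
                  = (univ.filter fun a => w a ≠ 0) ∪ (univ.filter fun a => w a ≠ 1) := by
                ext a
                simp only [mem_univ, mem_union, mem_filter, true_and, true_iff]
                by_cases hwa : w a = 0
                · right
                  rw [hwa]
                  exact zero_ne_one_fin K hK
                · left; exact hwa
              calc r = ((univ.filter fun a => w a ≠ 0)
                    ∪ (univ.filter fun a => w a ≠ 1)).card := by
                    rw [← hcover]; simp
                _ ≤ _ := Finset.card_union_le _ _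
            exact hg ⟨by omega, by omega, hc3, by omega⟩
          rw [hB0, zero_mul]
        · have hA0 : (univ.filter fun w : Fin m → Fin (K + 1) =>
              (univ.filter fun b => w b ≠ 0).card = i).card = 0 := by
            rw [Finset.card_eq_zero, Finset.filter_eq_empty_iff]
            intro w _
            have : (univ.filter fun b => w b ≠ 0).card ≤ m :=
              le_trans (Finset.card_filter_le _ _) (by simp)
            omega
          rw [hA0, mul_zero]
    · intro p _
      rw [Finset.mem_coe, Finset.mem_range]
      have h9 : (univ.filter fun b => p.2 b ≠ 0).card ≤ m :=
        le_trans (Finset.card_filter_le _ _) (by simp)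
      have h10 : m ≤ d := by omega
      exact Nat.lt_succ_of_le (le_trans h9 h10)
  · -- symmetry
    set τ : (Fin d → Fin (K + 1)) → (Fin d → Fin (K + 1)) :=
      fun z i => if (i : ℕ) < r then Equiv.swap 0 1 (z i) else z i with hτ
    have hsw0 : ∀ x : Fin (K + 1), (Equiv.swap 0 1 x ≠ 0 ↔ x ≠ 1) := by
      intro x
      rw [not_iff_not, Equiv.swap_apply_eq_iff, Equiv.swap_apply_left]
    have hsw1 : ∀ x : Fin (K + 1), (Equiv.swap 0 1 x ≠ 1 ↔ x ≠ 0) := by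
      intro x
      rw [not_iff_not, Equiv.swap_apply_eq_iff, Equiv.swap_apply_right]
    have hham1 : ∀ z : Fin d → Fin (K + 1), ham (fun _ => 0) (τ z) = ham xb z := by
      intro z
      rw [ham, ham]
      congr 1
      ext i
      simp only [mem_filter, mem_univ, true_and, hτ, hxb]
      by_cases hir : (i : ℕ) < r
      · simp only [hir, if_pos]
        exact hsw0 (z i)
      · simp only [hir, if_neg, not_false_iff]
    have hham2 : ∀ z : Fin d → Fin (K + 1), ham xb (τ z) = ham (fun _ => 0) z := by
      intro z
      rw [ham, ham]
      congr 1
      ext i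
      simp only [mem_filter, mem_univ, true_and, hτ, hxb]
      by_cases hir : (i : ℕ) < r
      · simp only [hir, if_pos]
        exact hsw1 (z i)
      · simp only [hir, if_neg, not_false_iff]
    have hinv : ∀ z : Fin d → Fin (K + 1), τ (τ z) = z := by
      intro z
      funext i
      simp only [hτ]
      by_cases hir : (i : ℕ) < r
      · simp [hir]
      · simp [hir]
    apply Finset.card_bij' (fun z _ => τ z) (fun z _ => τ z)
    · intro z hz
      simp only [mem_filter, mem_univ, true_and] at hz ⊢
      rw [hham1, hham2]
      exact ⟨hz.2, hz.1⟩
    · intro z hz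
      simp only [mem_filter, mem_univ, true_and] at hz ⊢
      rw [hham1, hham2]
      exact ⟨hz.2, hz.1⟩
    · intro z _
      exact hinv z
    · intro z _
      exact hinv z
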